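/- arXiv:1904.11698 — 4 statements merged into one kernel-verified Lean document; each statement's English description precedes it below -/
import Mathlib

section
/- Let d be a positive natural number and let P_0, P_1, …, P_d be d+1 subsets of ℝ^d. If a point x ∈ ℝ^d lies in the convex hull of every P_i (for 0 ≤ i ≤ d), then there exist points p_0 ∈ P_0, p_1 ∈ P_1, …, p_d ∈ P_d such that x lies in the convex hull of {p_0, p_1, …, p_d}. -/
open Metric Finset Module Set
open scoped RealInnerProductSpace

-- card bound for affinely independent sets in a hyperplane through y with normal v
lemma card_le_of_mem_hyperplane {d : ℕ} (hd : 0 < d) (v y : EuclideanSpace ℝ (Fin d)) (hv : v ≠ 0)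
    (s : Finset (EuclideanSpace ℝ (Fin d)))
    (hAI : AffineIndependent ℝ ((↑) : s → EuclideanSpace ℝ (Fin d)))
    (hs : ∀ z ∈ s, ⟪v, z - y⟫ = 0) : s.card ≤ d := by
  classical
  set f : EuclideanSpace ℝ (Fin d) →ₗ[ℝ] ℝ := (innerSL ℝ v).toLinearMap with hf
  have hker : finrank ℝ (LinearMap.ker f) + 1 = d := by
    have h1 := LinearMap.finrank_range_add_finrank_ker f
    have hrange : finrank ℝ (LinearMap.range f) = 1 := by
      have hne : LinearMap.range f ≠ ⊥ := by
        intro hbot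
        have : f v = 0 := by
          have : f v ∈ LinearMap.range f := LinearMap.mem_range_self f v
          rw [hbot] at this; simpa using this
        exact hv ((inner_self_eq_zero (𝕜 := ℝ)).mp this)
      have hle : finrank ℝ (LinearMap.range f) ≤ 1 := by
        simpa using (LinearMap.range f).finrank_le
      have hge : 1 ≤ finrank ℝ (LinearMap.range f) := by
        rcases Nat.eq_zero_or_pos (finrank ℝ (LinearMap.range f)) with h0 | h0
        · exact absurd (Submodule.finrank_eq_zero.mp h0) hne
        · exact h0
      omega
    have hE : finrank ℝ (EuclideanSpace ℝ (Fin d)) = d := finrank_euclideanSpace_fin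
    omega
  have hcard := hAI.card_le_finrank_succ
  have hspan : vectorSpan ℝ (Set.range ((↑) : s → EuclideanSpace ℝ (Fin d))) ≤ LinearMap.ker f := by
    rw [vectorSpan_def, Submodule.span_le]
    rintro u ⟨a, ha, b, hb, rfl⟩
    simp only [Subtype.range_coe_subtype, Finset.setOf_mem, Finset.mem_coe] at ha hb
    have h1 : ⟪v, a - y⟫ = 0 := hs a ha
    have h2 : ⟪v, b - y⟫ = 0 := hs b hb
    have h3 : ⟪v, a - b⟫ = 0 := by
      have : a - b = (a - y) - (b - y) := by abel
      rw [this, inner_sub_right, h1, h2, sub_zero]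
    simpa [hf, LinearMap.mem_ker] using h3
  have hmono : finrank ℝ (vectorSpan ℝ (Set.range ((↑) : s → EuclideanSpace ℝ (Fin d))))
      ≤ finrank ℝ (LinearMap.ker f) := Submodule.finrank_mono hspan
  have : Fintype.card s = s.card := Fintype.card_coe s
  omega

lemma colorful_caratheodory_euc {d : ℕ} (hd : 0 < d)
    (t : Fin (d + 1) → Finset (EuclideanSpace ℝ (Fin d))) (x : EuclideanSpace ℝ (Fin d))
    (hx : ∀ i, x ∈ convexHull ℝ ((t i : Set (EuclideanSpace ℝ (Fin d))))) :
    ∃ p : Fin (d + 1) → EuclideanSpace ℝ (Fin d),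
      (∀ i, p i ∈ t i) ∧ x ∈ convexHull ℝ (Set.range p) := by
  classical
  set S : Finset (Fin (d + 1) → EuclideanSpace ℝ (Fin d)) := Fintype.piFinset t with hS
  have hSne : S.Nonempty := by
    rw [hS, Fintype.piFinset_nonempty]
    intro i
    exact Finset.coe_nonempty.mp ((convexHull_nonempty_iff (𝕜 := ℝ)).mp ⟨x, hx i⟩)
  obtain ⟨p, hpS, hpmin⟩ := S.exists_min_image
      (fun q => infDist x (convexHull ℝ (Set.range q))) hSne
  have hp : ∀ i, p i ∈ t i := by
    rw [hS, Fintype.mem_piFinset] at hpS; exact hpS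
  refine ⟨p, hp, ?_⟩
  by_contra hxK
  set K := convexHull ℝ (Set.range p) with hK
  have hKcomp : IsCompact K := (Set.finite_range p).isCompact_convexHull ℝ
  have hKconv : Convex ℝ K := convex_convexHull ℝ _
  have hKne : K.Nonempty := ⟨p 0, subset_convexHull ℝ _ ⟨0, rfl⟩⟩
  obtain ⟨y, hyK, hxy⟩ := hKcomp.exists_infDist_eq_dist hKne x
  have hxney : x ≠ y := fun h => hxK (h ▸ hyK)
  set v := x - y with hv
  have hvne : v ≠ 0 := sub_ne_zero.mpr hxney
  -- projection characterization
  have hproj : ∀ z ∈ K, ⟪v, z - y⟫ ≤ 0 := by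
    have h1 : ‖x - y‖ = ⨅ w : K, ‖x - w‖ := by
      rw [← dist_eq_norm, ← hxy, infDist_eq_iInf]
      simp_rw [dist_eq_norm]
    exact (norm_eq_iInf_iff_real_inner_le_zero hKconv hyK).mp h1
  -- decompose y as a convex combination
  have hyK' : y ∈ convexHull ℝ ((Finset.image p Finset.univ : Finset _) : Set _) := by
    rw [Finset.coe_image, Finset.coe_univ, Set.image_univ]; exact hyK
  rw [Finset.convexHull_eq] at hyK'
  obtain ⟨w, hw0, hw1, hwy⟩ := hyK'
  have hwy' : ∑ z ∈ Finset.image p Finset.univ, w z • z = y := by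
    rw [← hwy, Finset.centerMass_eq_of_sum_1 _ _ hw1]; simp
  -- terms with positive weight lie on the hyperplane
  have hterm : ∀ z ∈ Finset.image p Finset.univ, w z ≠ 0 → ⟪v, z - y⟫ = 0 := by
    have hsum : ∑ z ∈ Finset.image p Finset.univ, w z * ⟪v, z - y⟫ = 0 := by
      have hvec : ∑ z ∈ Finset.image p Finset.univ, w z • (z - y) = 0 := by
        simp only [smul_sub, Finset.sum_sub_distrib, hwy', ← Finset.sum_smul, hw1, one_smul,
          sub_self]
      calc ∑ z ∈ Finset.image p Finset.univ, w z * ⟪v, z - y⟫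
          = ⟪v, ∑ z ∈ Finset.image p Finset.univ, w z • (z - y)⟫ := by
            rw [inner_sum]; congr 1; ext z; rw [real_inner_smul_right]
        _ = 0 := by rw [hvec, inner_zero_right]
    have hnp : ∀ z ∈ Finset.image p Finset.univ, w z * ⟪v, z - y⟫ ≤ 0 := by
      intro z hz
      have hzK : z ∈ K := subset_convexHull ℝ _ (by
        simpa using (Finset.mem_image.mp hz).imp (fun i h => h.2))
      exact mul_nonpos_of_nonneg_of_nonpos (hw0 z hz) (hproj z hzK)
    intro z hz hwz
    have := (Finset.sum_eq_zero_iff_of_nonpos hnp).mp hsum z hz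
    rcases mul_eq_zero.mp this with h | h
    · exact absurd h hwz
    · exact h
  -- y is in the hull of the support, which lies on the hyperplane
  set T := (Finset.image p Finset.univ).filter (fun z => w z ≠ 0) with hT
  have hyT : y ∈ convexHull ℝ (T : Set _) := by
    rw [Finset.convexHull_eq]
    refine ⟨w, fun z hz => hw0 z (Finset.mem_of_mem_filter z hz), ?_, ?_⟩
    · rw [hT, Finset.sum_filter_ne_zero]; exact hw1
    · rw [hT, Finset.centerMass_filter_ne_zero]; exact hwy
  rw [convexHull_eq_union] at hyT
  simp only [Set.mem_iUnion, exists_prop] at hyT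
  obtain ⟨s, hsT, hsAI, hys⟩ := hyT
  -- s has at most d elements
  have hsH : ∀ z ∈ s, ⟪v, z - y⟫ = 0 := by
    intro z hz
    have hzT : z ∈ T := hsT hz
    rw [hT, Finset.mem_filter] at hzT
    exact hterm z hzT.1 hzT.2
  have hscard : s.card ≤ d := card_le_of_mem_hyperplane hd v y hvne s hsAI hsH
  -- a free color i₀
  have hsub : ∀ z ∈ s, ∃ i : Fin (d + 1), p i = z := by
    intro z hz
    have hzT : z ∈ T := hsT hz
    rw [hT, Finset.mem_filter] at hzT
    obtain ⟨hzim, -⟩ := hzT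
    obtain ⟨i, -, hi⟩ := Finset.mem_image.mp hzim
    exact ⟨i, hi⟩
  choose g hg using hsub
  set J : Finset (Fin (d + 1)) := s.attach.image (fun z => g z.1 z.2) with hJ
  have hJcard : J.card ≤ d := by
    calc J.card ≤ s.attach.card := Finset.card_image_le
      _ = s.card := Finset.card_attach
      _ ≤ d := hscard
  have hfree : ∃ i₀ : Fin (d + 1), i₀ ∉ J := by
    by_contra h
    push_neg at h
    have hsubJ : (Finset.univ : Finset (Fin (d + 1))) ⊆ J := fun i _ => h i
    have := Finset.card_le_card hsubJ
    rw [Finset.card_univ, Fintype.card_fin] at this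
    omega
  obtain ⟨i₀, hi₀⟩ := hfree
  -- a point q of color i₀ strictly on the x-side
  have hqex : ∃ q ∈ t i₀, 0 < ⟪v, q - y⟫ := by
    by_contra h
    push_neg at h
    have hlin : IsLinearMap ℝ (fun z : EuclideanSpace ℝ (Fin d) => ⟪v, z⟫) :=
      ⟨fun a b => inner_add_right v a b, fun c a => real_inner_smul_right v a c⟩
    have hhalf : convexHull ℝ ((t i₀ : Set (EuclideanSpace ℝ (Fin d))))
        ⊆ {z | ⟪v, z⟫ ≤ ⟪v, y⟫} := by
      apply convexHull_min
      · intro z hz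
        have := h z hz
        rw [inner_sub_right] at this
        show ⟪v, z⟫ ≤ ⟪v, y⟫
        linarith
      · exact convex_halfSpace_le hlin _
    have hxle : ⟪v, x⟫ ≤ ⟪v, y⟫ := hhalf (hx i₀)
    have : ⟪v, v⟫ ≤ 0 := by
      rw [hv, inner_sub_right]; linarith
    exact hvne ((inner_self_eq_zero (𝕜 := ℝ)).mp
      (le_antisymm this real_inner_self_nonneg))
  obtain ⟨q, hqt, hqpos⟩ := hqex
  -- the updated selection
  set p' := Function.update p i₀ q with hp'
  have hp'S : p' ∈ S := by
    rw [hS, Fintype.mem_piFinset]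
    intro i
    rcases eq_or_ne i i₀ with rfl | hi
    · rw [hp', Function.update_self]; exact hqt
    · rw [hp', Function.update_of_ne hi]; exact hp i
  have hyp' : y ∈ convexHull ℝ (Set.range p') := by
    refine convexHull_mono ?_ hys
    intro z hz
    rw [Finset.mem_coe] at hz
    refine ⟨g z hz, ?_⟩
    have hiJ : g z hz ∈ J := by
      rw [hJ]
      exact Finset.mem_image.mpr ⟨⟨z, hz⟩, Finset.mem_attach _ _, rfl⟩
    have hne : g z hz ≠ i₀ := fun h => hi₀ (h ▸ hiJ)
    rw [hp', Function.update_of_ne hne]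
    exact hg z hz
  have hqp' : q ∈ convexHull ℝ (Set.range p') :=
    subset_convexHull ℝ _ ⟨i₀, by rw [hp', Function.update_self]⟩
  -- pick a point strictly closer to x
  have hqy : q ≠ y := by
    rintro rfl
    simp at hqpos
  set c : ℝ := ⟪v, q - y⟫ with hc
  set n : ℝ := ‖q - y‖ ^ 2 with hn
  have hnpos : 0 < n := by
    rw [hn]
    have : q - y ≠ 0 := sub_ne_zero.mpr hqy
    exact pow_pos (norm_pos_iff.mpr this) 2
  set θ : ℝ := min 1 (c / n) with hθ
  have hθ0 : 0 < θ := lt_min one_pos (div_pos hqpos hnpos)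
  have hθ1 : θ ≤ 1 := min_le_left _ _
  have hθcn : θ * n ≤ c := by
    have : θ ≤ c / n := min_le_right _ _
    calc θ * n ≤ (c / n) * n := by nlinarith
      _ = c := by field_simp
  have hzmem : (1 - θ) • y + θ • q ∈ convexHull ℝ (Set.range p') :=
    (convex_convexHull ℝ _) hyp' hqp' (by linarith) (le_of_lt hθ0) (by ring)
  have hdist : ‖x - ((1 - θ) • y + θ • q)‖ < ‖x - y‖ := by
    have hrw : x - ((1 - θ) • y + θ • q) = v - θ • (q - y) := by
      rw [hv, smul_sub, sub_smul, one_smul]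
      abel
    rw [hrw]
    have hexp : ‖v - θ • (q - y)‖ ^ 2 = ‖v‖ ^ 2 - 2 * θ * c + θ ^ 2 * n := by
      rw [norm_sub_sq_real, real_inner_smul_right, norm_smul, hc, hn]
      rw [mul_pow, Real.norm_eq_abs, sq_abs]
      ring
    have hsq : ‖v - θ • (q - y)‖ ^ 2 < ‖v‖ ^ 2 := by
      rw [hexp]
      nlinarith [mul_le_mul_of_nonneg_left hθcn hθ0.le, mul_pos hθ0 hqpos]
    exact lt_of_pow_lt_pow_left₀ 2 (norm_nonneg v) hsq
  have hlt : infDist x (convexHull ℝ (Set.range p')) < infDist x K := by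
    calc infDist x (convexHull ℝ (Set.range p')) ≤ dist x ((1 - θ) • y + θ • q) :=
          infDist_le_dist_of_mem hzmem
      _ < dist x y := by rw [dist_eq_norm, dist_eq_norm]; exact hdist
      _ = infDist x K := hxy.symm
  exact absurd (hpmin p' hp'S) (not_le.mpr hlt)

/-- **Bárány's Colorful Carathéodory Theorem.**
Let `d` be a positive natural number and `P 0, …, P d` be `d + 1` subsets of `ℝ^d`.
If a point `x ∈ ℝ^d` lies in the convex hull of every `P i`, then one can choose
points `p i ∈ P i` such that `x` lies in the convex hull of `{p 0, …, p d}`. -/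
theorem colorful_caratheodory (d : ℕ) (hd : 0 < d)
    (P : Fin (d + 1) → Set (Fin d → ℝ)) (x : Fin d → ℝ)
    (hx : ∀ i, x ∈ convexHull ℝ (P i)) :
    ∃ p : Fin (d + 1) → (Fin d → ℝ),
      (∀ i, p i ∈ P i) ∧ x ∈ convexHull ℝ (Set.range p) := by
  classical
  have hfin : ∀ i, ∃ t : Finset (Fin d → ℝ),
      ↑t ⊆ P i ∧ x ∈ convexHull ℝ (t : Set (Fin d → ℝ)) := by
    intro i
    have h := hx i
    rw [convexHull_eq_union_convexHull_finite_subsets] at h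
    simp only [Set.mem_iUnion, exists_prop] at h
    exact h
  choose t ht₁ ht₂ using hfin
  set e : (Fin d → ℝ) ≃ₗ[ℝ] EuclideanSpace ℝ (Fin d) :=
    (WithLp.linearEquiv 2 ℝ (Fin d → ℝ)).symm with he
  obtain ⟨p, hp1, hp2⟩ := colorful_caratheodory_euc hd
    (fun i => (t i).image e) (e x) (fun i => by
      have h := Set.mem_image_of_mem e.toLinearMap (ht₂ i)
      rw [LinearMap.image_convexHull] at h
      simpa [Finset.coe_image] using h)
  refine ⟨fun i => e.symm (p i), fun i => ?_, ?_⟩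
  · obtain ⟨z, hz, hzp⟩ := Finset.mem_image.mp (hp1 i)
    show e.symm (p i) ∈ P i
    rw [← hzp, e.symm_apply_apply]; exact ht₁ i hz
  · have h := Set.mem_image_of_mem e.symm.toLinearMap hp2
    rw [LinearMap.image_convexHull, ← Set.range_comp] at h
    simpa [Function.comp_def] using h
end

section
/- Let M be a matroid with rank function ρ on a finite ground set E, let r be a natural number with 1 ≤ r ≤ |E| and ρ(E) = r − 1, and set r* = |E| − r. Let M* be the dual matroid of M with rank function ρ*. If S ⊆ E is inclusion-minimal among subsets T ⊆ E satisfying ρ*(E \ T) = r* − 1, then S is a double circuit of M, i.e., ρ(S) = |S| − 2 and ρ(S \ {e}) = |S| − 2 for every e ∈ S. -/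
/-- Let `M` be a matroid with rank function `ρ` on a finite ground set `E`
(here the whole finite type, so `E = Finset.univ` and `|E| = Fintype.card α`),
let `1 ≤ r ≤ |E|` with `ρ E = r - 1`, and set `r* = |E| - r`. Let `ρd` be the
rank function of the dual matroid `M*`, so `ρd X = |X| + ρ (E \ X) - ρ E`.
If `S` is inclusion-minimal among subsets `T` with `ρd (E \ T) = r* - 1`,
then `S` is a double circuit of `M`: `ρ S = |S| - 2` and
`ρ (S \ {e}) = |S| - 2` for every `e ∈ S`.
(Equalities involving subtraction are written additively.) -/
theorem minimal_dual_corank_is_double_circuit {α : Type*} [DecidableEq α] [Fintype α]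
    (ρ : Finset α → ℕ)
    (hcard : ∀ X : Finset α, ρ X ≤ X.card)
    (hmono : ∀ ⦃X Y : Finset α⦄, X ⊆ Y → ρ X ≤ ρ Y)
    (hsubmod : ∀ X Y : Finset α, ρ (X ∪ Y) + ρ (X ∩ Y) ≤ ρ X + ρ Y)
    (r : ℕ) (hr1 : 1 ≤ r) (hr2 : r ≤ Fintype.card α)
    (hrank : ρ Finset.univ + 1 = r)
    (ρd : Finset α → ℕ)
    (hdual : ∀ X : Finset α, ρd X + ρ Finset.univ = X.card + ρ (Finset.univ \ X))
    (S : Finset α)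
    (hS : ρd (Finset.univ \ S) + 1 = Fintype.card α - r)
    (hSmin : ∀ T ⊂ S, ¬ (ρd (Finset.univ \ T) + 1 = Fintype.card α - r)) :
    ρ S + 2 = S.card ∧ ∀ e ∈ S, ρ (S.erase e) + 2 = S.card := by
  have hsd : ∀ T : Finset α, Finset.univ \ (Finset.univ \ T) = T := by
    intro T
    ext x; simp
  have hsdcard : ∀ T : Finset α, (Finset.univ \ T).card + T.card = Fintype.card α := by
    intro T
    have h1 : T.card ≤ Fintype.card α := Finset.card_le_univ T
    rw [Finset.card_sdiff_of_subset (Finset.subset_univ T), Finset.card_univ]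
    omega
  have h1 := hdual (Finset.univ \ S)
  rw [hsd] at h1
  have h2 := hsdcard S
  have hρS : ρ S + 2 = S.card := by omega
  refine ⟨hρS, ?_⟩
  intro e he
  by_cases hcase : ρ (S.erase e) + 2 = S.card
  · exact hcase
  · exfalso
    have hTsub : S.erase e ⊂ S := Finset.erase_ssubset he
    have hTcard : (S.erase e).card + 1 = S.card := Finset.card_erase_add_one he
    have hmonoT : ρ (S.erase e) ≤ ρ S := hmono (Finset.erase_subset e S)
    have hsub := hsubmod (S.erase e) {e}
    have hunion : S.erase e ∪ {e} = S := by
      rw [Finset.union_comm, ← Finset.insert_eq, Finset.insert_erase he]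
    have hinter : S.erase e ∩ {e} = ∅ := by
      simp [Finset.inter_singleton_of_notMem, Finset.notMem_erase]
    rw [hunion, hinter] at hsub
    have hempty : ρ ∅ = 0 := Nat.le_zero.mp (by simpa using hcard ∅)
    have hsingle : ρ {e} ≤ 1 := by simpa using hcard {e}
    have hρT : ρ (S.erase e) + 2 = (S.erase e).card := by omega
    have h3 := hdual (Finset.univ \ (S.erase e))
    rw [hsd] at h3
    have h4 := hsdcard (S.erase e)
    exact hSmin _ hTsub (by omega)
end

section
/- Let M be a matroid of rank d ≥ 1 with rank function ρ on a finite ground set E. Let A, B ⊆ E with |A| = |B| = d, |A ∩ B| = d − 1, ρ(A) ≤ d − 1, and ρ(B) ≤ d − 1. If A ∩ B is independent in M, then A ∪ B contains a double circuit of M. -/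
/-- `D` is a double circuit of the matroid with rank function `ρ`:
`ρ D = |D| - 2` and `ρ (D \ {e}) = |D| - 2` for every `e ∈ D`. -/
def IsDoubleCircuit {α : Type*} [DecidableEq α] (ρ : Finset α → ℕ) (D : Finset α) : Prop :=
  ρ D + 2 = D.card ∧ ∀ e ∈ D, ρ (D.erase e) + 2 = D.card

/-- Any set with rank deficiency at least 2 contains a double circuit. -/
lemma exists_double_circuit_aux {α : Type*} [DecidableEq α] (ρ : Finset α → ℕ)
    (hmono : ∀ ⦃X Y : Finset α⦄, X ⊆ Y → ρ X ≤ ρ Y) :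
    ∀ n (S : Finset α), S.card = n → ρ S + 2 ≤ S.card → ∃ D ⊆ S, IsDoubleCircuit ρ D := by
  intro n
  induction n using Nat.strong_induction_on with
  | _ n ih =>
    intro S hSn hS
    by_cases h : ∃ e ∈ S, ρ (S.erase e) + 2 ≤ (S.erase e).card
    · obtain ⟨e, he, hle⟩ := h
      have hc : (S.erase e).card < n := by
        rw [← hSn]; exact Finset.card_erase_lt_of_mem he
      obtain ⟨D, hD, hDC⟩ := ih _ hc (S.erase e) rfl hle
      exact ⟨D, hD.trans (Finset.erase_subset _ _), hDC⟩
    · push_neg at h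
      refine ⟨S, le_refl _, ?_, ?_⟩
      · -- ρ S + 2 = S.card
        have hne : S.Nonempty := Finset.card_pos.mp (by omega)
        obtain ⟨e, he⟩ := hne
        have h1 := h e he
        have h2 : (S.erase e).card = S.card - 1 := Finset.card_erase_of_mem he
        have h3 : ρ (S.erase e) ≤ ρ S := hmono (Finset.erase_subset _ _)
        omega
      · intro e he
        have h1 := h e he
        have h2 : (S.erase e).card = S.card - 1 := Finset.card_erase_of_mem he
        have h3 : ρ (S.erase e) ≤ ρ S := hmono (Finset.erase_subset _ _)
        omega

/-- Let `M` be a matroid of rank `d ≥ 1` with rank function `ρ` on a finite ground set.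
Let `A, B` with `|A| = |B| = d`, `|A ∩ B| = d - 1`, `ρ A ≤ d - 1` and `ρ B ≤ d - 1`.
If `A ∩ B` is independent, then `A ∪ B` contains a double circuit. -/
theorem union_contains_double_circuit_of_indep_inter {α : Type*} [DecidableEq α] [Fintype α]
    (ρ : Finset α → ℕ)
    (hcard : ∀ X : Finset α, ρ X ≤ X.card)
    (hmono : ∀ ⦃X Y : Finset α⦄, X ⊆ Y → ρ X ≤ ρ Y)
    (hsubmod : ∀ X Y : Finset α, ρ (X ∪ Y) + ρ (X ∩ Y) ≤ ρ X + ρ Y)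
    (d : ℕ) (hd : 1 ≤ d) (hrank : ρ Finset.univ = d)
    (A B : Finset α) (hA : A.card = d) (hB : B.card = d)
    (hABcard : (A ∩ B).card + 1 = d)
    (hρA : ρ A + 1 ≤ d) (hρB : ρ B + 1 ≤ d)
    (hindep : ρ (A ∩ B) = (A ∩ B).card) :
    ∃ D ⊆ A ∪ B, IsDoubleCircuit ρ D := by
  have hcu : (A ∪ B).card + (A ∩ B).card = A.card + B.card :=
    Finset.card_union_add_card_inter A B
  have hsub := hsubmod A B
  have : ρ (A ∪ B) + 2 ≤ (A ∪ B).card := by omega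
  exact exists_double_circuit_aux ρ hmono (A ∪ B).card (A ∪ B) rfl this
end

section
/- Let M be a matroid of rank d ≥ 1 with rank function ρ on a finite ground set E. Let A, B ⊆ E with |A| = |B| = d, |A ∩ B| = d − 1, and ρ(B) ≤ d − 1. If there exists an element a ∈ A \ B such that ρ((A ∩ B) ∪ {a}) = ρ(A ∩ B), then A ∪ B contains a double circuit of M. -/
/-- Any set whose rank is at most its cardinality minus two contains a double circuit. -/
lemma exists_double_circuit {α : Type*} [DecidableEq α] (ρ : Finset α → ℕ)
    (hmono : ∀ ⦃X Y : Finset α⦄, X ⊆ Y → ρ X ≤ ρ Y)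
    (X : Finset α) (hX : ρ X + 2 ≤ X.card) :
    ∃ D ⊆ X, IsDoubleCircuit ρ D := by
  induction X using Finset.strongInductionOn with
  | _ X ih =>
    by_cases h : ∃ e ∈ X, ρ (X.erase e) + 3 ≤ X.card
    · obtain ⟨e, he, hle⟩ := h
      have hcarde : (X.erase e).card + 1 = X.card := by
        rw [Finset.card_erase_of_mem he]
        have : 1 ≤ X.card := Finset.card_pos.2 ⟨e, he⟩
        omega
      obtain ⟨D, hD, hdc⟩ := ih (X.erase e) (Finset.erase_ssubset he) (by omega)
      exact ⟨D, hD.trans (Finset.erase_subset _ _), hdc⟩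
    · push_neg at h
      have key : ∀ e ∈ X, ρ (X.erase e) + 2 = X.card := by
        intro e he
        have h1 := h e he
        have h2 : ρ (X.erase e) ≤ ρ X := hmono (Finset.erase_subset _ _)
        omega
      have hne : X.Nonempty := by
        rw [← Finset.card_pos]; omega
      obtain ⟨e, he⟩ := hne
      have h1 := key e he
      have h2 : ρ (X.erase e) ≤ ρ X := hmono (Finset.erase_subset _ _)
      exact ⟨X, Finset.Subset.refl _, by omega, key⟩

/-- Let `M` be a matroid of rank `d ≥ 1` with rank function `ρ` on a finite ground set.
Let `A, B` with `|A| = |B| = d`, `|A ∩ B| = d - 1` and `ρ B ≤ d - 1`. If some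
`a ∈ A \ B` does not increase the rank of `A ∩ B`, i.e.
`ρ ((A ∩ B) ∪ {a}) = ρ (A ∩ B)`, then `A ∪ B` contains a double circuit. -/
theorem union_contains_double_circuit_of_nonincreasing {α : Type*} [DecidableEq α] [Fintype α]
    (ρ : Finset α → ℕ)
    (hcard : ∀ X : Finset α, ρ X ≤ X.card)
    (hmono : ∀ ⦃X Y : Finset α⦄, X ⊆ Y → ρ X ≤ ρ Y)
    (hsubmod : ∀ X Y : Finset α, ρ (X ∪ Y) + ρ (X ∩ Y) ≤ ρ X + ρ Y)
    (d : ℕ) (hd : 1 ≤ d) (hrank : ρ Finset.univ = d)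
    (A B : Finset α) (hA : A.card = d) (hB : B.card = d)
    (hABcard : (A ∩ B).card + 1 = d)
    (hρB : ρ B + 1 ≤ d)
    (ha : ∃ a ∈ A \ B, ρ (insert a (A ∩ B)) = ρ (A ∩ B)) :
    ∃ D ⊆ A ∪ B, IsDoubleCircuit ρ D := by
  obtain ⟨a, haAB, hra⟩ := ha
  rw [Finset.mem_sdiff] at haAB
  have hanotin : a ∉ A ∩ B := by simp [haAB.2]
  -- `insert a (A ∩ B) = A`
  have hAeq : insert a (A ∩ B) = A := by
    apply Finset.eq_of_subset_of_card_le
    · exact Finset.insert_subset haAB.1 Finset.inter_subset_left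
    · rw [Finset.card_insert_of_notMem hanotin, hA]
      omega
  -- rank of A equals rank of A ∩ B
  have hrA : ρ A = ρ (A ∩ B) := by rw [hAeq] at hra; exact hra
  -- submodularity: ρ (A ∪ B) ≤ ρ B
  have hsub := hsubmod A B
  have hρAB : ρ (A ∪ B) ≤ ρ B := by omega
  -- cardinality of the union
  have hcardU : (A ∪ B).card = d + 1 := by
    have := Finset.card_union_add_card_inter A B
    omega
  exact exists_double_circuit ρ hmono (A ∪ B) (by omega)
end
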